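/- Let γ : ℝ → ℝ³ be a C² curve with |γ'(s)| = 1 for all s ∈ ℝ, and let r > 0 satisfy |γ''(s)| ≤ 1/r for all s ∈ ℝ. Let s₀ ∈ ℝ and x₀ ∈ ℝ³ be such that |x₀ − γ(s₀)| < r/8. Then there exists a unique ξ₀ ∈ (s₀ − r/4, s₀ + r/4) such that (x₀ − γ(ξ₀)) · γ'(ξ₀) = 0. -/

import Mathlib

noncomputable section
open Real MeasureTheory

/-- `ℝ³` as Euclidean space. -/
abbrev R3 : Type := EuclideanSpace ℝ (Fin 3)

/-- Lemma 3.4, existence and uniqueness of the local orthogonal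
projection parameter. -/
theorem stmt0
    (γ : ℝ → R3) (hγ : ContDiff ℝ 2 γ)
    (harc : ∀ s : ℝ, ‖deriv γ s‖ = 1)
    (r : ℝ) (hr : 0 < r)
    (hcurv : ∀ s : ℝ, ‖deriv (deriv γ) s‖ ≤ 1 / r)
    (s₀ : ℝ) (x₀ : R3) (hx₀ : ‖x₀ - γ s₀‖ < r / 8) :
    ∃! ξ₀ : ℝ, ξ₀ ∈ Set.Ioo (s₀ - r / 4) (s₀ + r / 4) ∧
      (inner ℝ (x₀ - γ ξ₀) (deriv γ ξ₀) : ℝ) = 0 := by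
  set a := s₀ - r / 4 with ha
  set b := s₀ + r / 4 with hb
  have hab : a < b := by rw [ha, hb]; linarith
  have h1 : Differentiable ℝ γ := hγ.differentiable (by norm_num)
  have h2 : ContDiff ℝ 1 (deriv γ) := by
    have := (contDiff_succ_iff_deriv (n := 1)).mp (by exact_mod_cast hγ)
    exact this.2.2
  have h2' : Differentiable ℝ (deriv γ) := h2.differentiable one_ne_zero
  set g : ℝ → ℝ := fun ξ => inner ℝ (x₀ - γ ξ) (deriv γ ξ) with hgdef
  have hgder : ∀ ξ : ℝ, HasDerivAt g (-1 + inner ℝ (x₀ - γ ξ) (deriv (deriv γ) ξ)) ξ := by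
    intro ξ
    have hf : HasDerivAt (fun t => x₀ - γ t) (-(deriv γ ξ)) ξ := by
      have := (hasDerivAt_const ξ x₀).sub (h1 ξ).hasDerivAt; rw [zero_sub] at this; exact this
    have hT : HasDerivAt (deriv γ) (deriv (deriv γ) ξ) ξ := (h2' ξ).hasDerivAt
    have h := hf.inner ℝ hT
    have hnorm : (inner ℝ (-(deriv γ ξ)) (deriv γ ξ) : ℝ) = -1 := by
      rw [inner_neg_left, real_inner_self_eq_norm_sq, harc ξ]
      norm_num
    rw [hnorm] at h
    simpa [add_comm] using h
  have hgc : Continuous g := by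
    rw [continuous_iff_continuousAt]; exact fun ξ => (hgder ξ).continuousAt
  -- Lipschitz bound on γ
  have hlip : ∀ s t : ℝ, ‖γ s - γ t‖ ≤ |s - t| := by
    intro s t
    have := convex_univ.norm_image_sub_le_of_norm_deriv_le (fun x _ => h1 x)
      (fun x _ => (harc x).le) (Set.mem_univ t) (Set.mem_univ s)
    simpa [Real.norm_eq_abs] using this
  -- bound on the distance on the interval
  have hdist : ∀ ξ ∈ Set.Icc a b, ‖x₀ - γ ξ‖ ≤ 3 * r / 8 := by
    intro ξ hξ
    have h3 : ‖x₀ - γ ξ‖ ≤ ‖x₀ - γ s₀‖ + ‖γ s₀ - γ ξ‖ := by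
      have := norm_sub_le_norm_sub_add_norm_sub x₀ (γ s₀) (γ ξ)
      linarith [this]
    have h4 : ‖γ s₀ - γ ξ‖ ≤ |s₀ - ξ| := hlip s₀ ξ
    have h5 : |s₀ - ξ| ≤ r / 4 := by
      rw [abs_le]; constructor <;> [skip; skip] <;>
        · obtain ⟨hl, hu⟩ := hξ; rw [ha] at hl; rw [hb] at hu; linarith
    linarith
  -- derivative bound
  have hderiv_neg : ∀ ξ ∈ Set.Icc a b, deriv g ξ ≤ -(5/8 : ℝ) := by
    intro ξ hξ
    rw [(hgder ξ).deriv]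
    have h6 : |(inner ℝ (x₀ - γ ξ) (deriv (deriv γ) ξ) : ℝ)| ≤ 3/8 := by
      calc |(inner ℝ (x₀ - γ ξ) (deriv (deriv γ) ξ) : ℝ)|
          ≤ ‖x₀ - γ ξ‖ * ‖deriv (deriv γ) ξ‖ := abs_real_inner_le_norm _ _
        _ ≤ (3 * r / 8) * (1 / r) := by
            apply mul_le_mul (hdist ξ hξ) (hcurv ξ) (norm_nonneg _) (by positivity)
        _ = 3/8 := by field_simp
    have := (abs_le.mp h6).2
    linarith
  have hanti : StrictAntiOn g (Set.Icc a b) := by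
    apply strictAntiOn_of_deriv_neg (convex_Icc a b) hgc.continuousOn
    intro x hx
    rw [interior_Icc] at hx
    have := hderiv_neg x (Set.Ioo_subset_Icc_self hx)
    linarith
  -- bound on g s₀
  have hgs₀ : |g s₀| < r / 8 := by
    calc |g s₀| ≤ ‖x₀ - γ s₀‖ * ‖deriv γ s₀‖ := abs_real_inner_le_norm _ _
      _ = ‖x₀ - γ s₀‖ := by rw [harc]; ring
      _ < r / 8 := hx₀
  have has₀ : a < s₀ := by rw [ha]; linarith
  have hs₀b : s₀ < b := by rw [hb]; linarith
  -- g b < 0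
  have hgb : g b < 0 := by
    obtain ⟨c, hc, hceq⟩ := exists_hasDerivAt_eq_slope g (deriv g) hs₀b
      hgc.continuousOn (fun x _ => (hgder x).deriv ▸ (hgder x))
    have hcI : c ∈ Set.Icc a b := Set.Icc_subset_Icc has₀.le le_rfl (Set.Ioo_subset_Icc_self hc)
    have h7 := hderiv_neg c hcI
    rw [hceq] at h7
    have hbs : b - s₀ = r / 4 := by rw [hb]; ring
    rw [hbs] at h7
    have h8 : g b - g s₀ ≤ -(5/8) * (r/4) := by
      rw [div_le_iff₀ (by linarith : (0:ℝ) < r/4)] at h7; linarith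
    have := (abs_lt.mp hgs₀).2
    linarith
  have hga : 0 < g a := by
    obtain ⟨c, hc, hceq⟩ := exists_hasDerivAt_eq_slope g (deriv g) has₀
      hgc.continuousOn (fun x _ => (hgder x).deriv ▸ (hgder x))
    have hcI : c ∈ Set.Icc a b := Set.Icc_subset_Icc le_rfl hs₀b.le (Set.Ioo_subset_Icc_self hc)
    have h7 := hderiv_neg c hcI
    rw [hceq] at h7
    have hbs : s₀ - a = r / 4 := by rw [ha]; ring
    rw [hbs] at h7
    have h8 : g s₀ - g a ≤ -(5/8) * (r/4) := by
      rw [div_le_iff₀ (by linarith : (0:ℝ) < r/4)] at h7; linarith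
    have := (abs_lt.mp hgs₀).1
    linarith
  -- IVT
  have h0 : (0:ℝ) ∈ Set.Ioo (g b) (g a) := ⟨hgb, hga⟩
  obtain ⟨ξ₀, hξ₀, hgξ₀⟩ := intermediate_value_Ioo' hab.le hgc.continuousOn h0
  refine ⟨ξ₀, ⟨hξ₀, hgξ₀⟩, ?_⟩
  rintro y ⟨hy, hgy⟩
  exact hanti.injOn (Set.Ioo_subset_Icc_self hy) (Set.Ioo_subset_Icc_self hξ₀)
    (hgy.trans hgξ₀.symm)
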